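/- With τ_1,…,τ_N the ordering of the positive roots determined by a reduced decomposition of the longest Weyl group element as in the context, and δ = (1/2)·Σ_{k=1}^N τ_k, one has for every j = 2,…,N: ⟨δ, τ_j^∨⟩ − 1 = Σ_{k=1}^{j−1} ⟨τ_k, τ_j^∨⟩; equivalently, Σ_{k=j+1}^{N} ⟨τ_k, τ_j^∨⟩ = Σ_{k=1}^{j−1} ⟨τ_k, τ_j^∨⟩. -/

import Mathlib

noncomputable section

/-- `reflComp pair g j = r_{g 1} ∘ r_{g 2} ∘ ⋯ ∘ r_{g j}` (rightmost reflection applied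
first), where `r_γ β = β − ⟨β, γ^∨⟩ • γ` and `pair β γ = ⟨β, γ^∨⟩`. -/
def reflComp {V : Type*} [AddCommGroup V] [Module ℝ V]
    (pair : V → V → ℝ) (g : ℕ → V) : ℕ → V → V
  | 0 => id
  | j + 1 => fun β => reflComp pair g j (β - pair β (g (j + 1)) • g (j + 1))

section Aux

variable {V : Type*} [AddCommGroup V] [Module ℝ V]
    (Φ : Finset V) (pair : V → V → ℝ)
    (hlin : ∀ α ∈ Φ, IsLinearMap ℝ fun β => pair β α)
    (hpair2 : ∀ α ∈ Φ, pair α α = 2)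
    (hroot_ne : ∀ α ∈ Φ, α ≠ 0)
    (hrefl : ∀ α ∈ Φ, ∀ β ∈ Φ, β - pair β α • α ∈ Φ)

include hlin hpair2 in
/-- The reflection in `α` is an involution. -/
lemma refl_invol {α : V} (hα : α ∈ Φ) (β : V) :
    (β - pair β α • α) - pair (β - pair β α • α) α • α = β := by
  have h : pair (β - pair β α • α) α = - pair β α := by
    rw [(hlin α hα).map_sub, (hlin α hα).map_smul, hpair2 α hα]
    simp [smul_eq_mul]; ring
  rw [h]; module

include hlin hpair2 hroot_ne hrefl in
/-- Invariance of the pairing under a single reflection. -/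
lemma step_inv {α γ : V} (hα : α ∈ Φ) (hγ : γ ∈ Φ) {β : V}
    (hβ : β ∈ Submodule.span ℝ (Φ : Set V)) :
    pair (β - pair β α • α) (γ - pair γ α • α) = pair β γ := by
  have hrγ : γ - pair γ α • α ∈ Φ := hrefl α hα γ hγ
  have linα := hlin α hα
  have linγ := hlin γ hγ
  have glin : IsLinearMap ℝ (fun β' => pair (β' - pair β' α • α) γ) := by
    constructor
    · intro x y
      rw [linα.map_add]
      have h : (x + y) - (pair x α + pair y α) • α
          = (x - pair x α • α) + (y - pair y α • α) := by module
      rw [h, linγ.map_add]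
    · intro c x
      rw [linα.map_smul]
      have h : c • x - (c • pair x α) • α = c • (x - pair x α • α) := by
        rw [smul_eq_mul]; module
      rw [h, linγ.map_smul]
  have key : ∀ β' ∈ Submodule.span ℝ (Φ : Set V),
      pair β' (γ - pair γ α • α) = pair (β' - pair β' α • α) γ := by
    have hf₁ : (IsLinearMap.mk' _ (hlin _ hrγ) : Module.Dual ℝ V) (γ - pair γ α • α) = 2 :=
      hpair2 _ hrγ
    have hg₁ : (IsLinearMap.mk' _ glin : Module.Dual ℝ V) (γ - pair γ α • α) = 2 := by
      show pair ((γ - pair γ α • α) - pair (γ - pair γ α • α) α • α) γ = 2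
      rw [refl_invol Φ pair hlin hpair2 hα γ]
      exact hpair2 γ hγ
    have hf₂ : Set.MapsTo (Module.preReflection (γ - pair γ α • α)
        (IsLinearMap.mk' _ (hlin _ hrγ))) (Φ : Set V) (Φ : Set V) := by
      intro y hy
      rw [Module.preReflection_apply]
      exact hrefl _ hrγ y hy
    have hg₂ : Set.MapsTo (Module.preReflection (γ - pair γ α • α)
        (IsLinearMap.mk' _ glin)) (Φ : Set V) (Φ : Set V) := by
      intro y hy
      rw [Module.preReflection_apply]
      have e1 : y - pair y α • α ∈ Φ := hrefl α hα y hy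
      have e2 : (y - pair y α • α) - pair (y - pair y α • α) γ • γ ∈ Φ := hrefl γ hγ _ e1
      have e3 := hrefl α hα _ e2
      have hpz : pair ((y - pair y α • α) - pair (y - pair y α • α) γ • γ) α
          = - pair y α - pair (y - pair y α • α) γ * pair γ α := by
        rw [linα.map_sub, linα.map_smul, linα.map_sub, linα.map_smul, hpair2 α hα]
        simp [smul_eq_mul]; ring
      have heq : ((y - pair y α • α) - pair (y - pair y α • α) γ • γ)
            - pair ((y - pair y α • α) - pair (y - pair y α • α) γ • γ) α • α
          = y - pair (y - pair y α • α) γ • (γ - pair γ α • α) := by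
        rw [hpz]; module
      show y - (IsLinearMap.mk' _ glin : Module.Dual ℝ V) y • (γ - pair γ α • α) ∈ (Φ : Set V)
      rw [IsLinearMap.mk'_apply, ← heq]
      exact e3
    have heq := Module.Dual.eq_of_preReflection_mapsTo' (R := ℝ)
      Φ.finite_toSet (Submodule.subset_span hrγ) hf₁ hf₂ hg₁ hg₂
    intro β' hβ'
    have h2 := LinearMap.congr_fun heq ⟨β', hβ'⟩
    simpa using h2
  have hβ' : β - pair β α • α ∈ Submodule.span ℝ (Φ : Set V) :=
    Submodule.sub_mem _ hβ (Submodule.smul_mem _ _ (Submodule.subset_span hα))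
  calc pair (β - pair β α • α) (γ - pair γ α • α)
      = pair ((β - pair β α • α) - pair (β - pair β α • α) α • α) γ := key _ hβ'
    _ = pair β γ := by rw [refl_invol Φ pair hlin hpair2 hα β]

include hlin hpair2 hroot_ne hrefl in
/-- Basic properties of `reflComp`: linearity, preservation of `Φ` and of its span, and
invariance of the pairing. -/
lemma reflComp_props (g : ℕ → V) (m : ℕ) (hg : ∀ k, 1 ≤ k → k ≤ m → g k ∈ Φ) :
    (∀ β γ : V, ∀ c : ℝ, reflComp pair g m (β - c • γ)
        = reflComp pair g m β - c • reflComp pair g m γ) ∧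
    (∀ γ ∈ Φ, reflComp pair g m γ ∈ Φ) ∧
    (∀ β ∈ Submodule.span ℝ (Φ : Set V),
        reflComp pair g m β ∈ Submodule.span ℝ (Φ : Set V)) ∧
    (∀ γ ∈ Φ, ∀ β ∈ Submodule.span ℝ (Φ : Set V),
        pair (reflComp pair g m β) (reflComp pair g m γ) = pair β γ) := by
  induction m with
  | zero => refine ⟨?_, ?_, ?_, ?_⟩ <;> simp [reflComp]
  | succ m ih =>
    obtain ⟨ihlin, ihΦ, ihspan, ihinv⟩ := ih (fun k h1 h2 => hg k h1 (by omega))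
    have hα : g (m + 1) ∈ Φ := hg (m + 1) (by omega) (le_refl _)
    have hstep : ∀ β, reflComp pair g (m + 1) β
        = reflComp pair g m (β - pair β (g (m + 1)) • g (m + 1)) := fun β => rfl
    refine ⟨?_, ?_, ?_, ?_⟩
    · intro β γ c
      rw [hstep, hstep, hstep]
      have h1 : pair (β - c • γ) (g (m + 1))
          = pair β (g (m + 1)) - c * pair γ (g (m + 1)) := by
        rw [(hlin _ hα).map_sub, (hlin _ hα).map_smul]; simp [smul_eq_mul]
      have h2 : (β - c • γ) - pair (β - c • γ) (g (m + 1)) • g (m + 1)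
          = (β - pair β (g (m + 1)) • g (m + 1))
            - c • (γ - pair γ (g (m + 1)) • g (m + 1)) := by
        rw [h1]; module
      rw [h2, ihlin]
    · intro γ hγ
      rw [hstep]; exact ihΦ _ (hrefl _ hα γ hγ)
    · intro β hβ
      rw [hstep]
      exact ihspan _
        (Submodule.sub_mem _ hβ (Submodule.smul_mem _ _ (Submodule.subset_span hα)))
    · intro γ hγ β hβ
      rw [hstep, hstep, ihinv _ (hrefl _ hα γ hγ) _
        (Submodule.sub_mem _ hβ (Submodule.smul_mem _ _ (Submodule.subset_span hα)))]
      exact step_inv Φ pair hlin hpair2 hroot_ne hrefl hα hγ hβ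

include hlin hpair2 hroot_ne in
/-- `⟨2δ, γ^∨⟩ = 2` for each simple root `γ`. -/
lemma pair_sumPos (Pos Δ : Finset V) (hPosSub : Pos ⊆ Φ) (hΔSub : Δ ⊆ Pos)
    (hsplit : ∀ α ∈ Φ, (α ∈ Pos ↔ -α ∉ Pos))
    (hbase : ∀ γ ∈ Δ, ∀ β ∈ Pos, β ≠ γ → β - pair β γ • γ ∈ Pos)
    {γ : V} (hγ : γ ∈ Δ) : pair (∑ β ∈ Pos, β) γ = 2 := by
  classical
  have hγP : γ ∈ Pos := hΔSub hγ
  have hγΦ : γ ∈ Φ := hPosSub hγP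
  have hsum := map_sum (IsLinearMap.mk' _ (hlin γ hγΦ)) (fun β => β) Pos
  simp only [IsLinearMap.mk'_apply] at hsum
  rw [hsum, ← Finset.add_sum_erase _ _ hγP, hpair2 γ hγΦ]
  have h0 : ∑ β ∈ Pos.erase γ, pair β γ = 0 := by
    refine Finset.sum_involution (fun β _ => β - pair β γ • γ) ?_ ?_ ?_ ?_
    · intro a _
      rw [(hlin γ hγΦ).map_sub, (hlin γ hγΦ).map_smul, hpair2 γ hγΦ]
      simp [smul_eq_mul]; ring
    · intro a _ hne hEq
      apply hne
      have h := sub_eq_self.mp hEq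
      rcases smul_eq_zero.mp h with h' | h'
      · exact h'
      · exact absurd h' (hroot_ne γ hγΦ)
    · intro a ha
      rw [Finset.mem_erase] at ha ⊢
      refine ⟨?_, hbase γ hγ a ha.2 ha.1⟩
      intro h
      replace h : a - pair a γ • γ = γ := h
      have hinv := refl_invol Φ pair hlin hpair2 hγΦ a
      rw [h, hpair2 γ hγΦ] at hinv
      have haγ : a = -γ := by rw [← hinv]; module
      have := (hsplit γ hγΦ).mp hγP
      rw [haγ] at ha
      exact this ha.2
    · intro a _
      exact refl_invol Φ pair hlin hpair2 hγΦ a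
  rw [h0]; ring

end Aux

/-- for a finite, reduced, crystallographic root pairing with base `Δ`,
positive roots `Pos`, and `τ_j = (r_{γ_1} ∘ ⋯ ∘ r_{γ_{j−1}})(γ_j)` enumerating the positive
roots (coming from a reduced decomposition of the longest Weyl group element), one has
`⟨δ, τ_j^∨⟩ − 1 = Σ_{k<j} ⟨τ_k, τ_j^∨⟩`, equivalently
`Σ_{k>j} ⟨τ_k, τ_j^∨⟩ = Σ_{k<j} ⟨τ_k, τ_j^∨⟩`, where `δ` is half the sum of the positive
roots. -/
theorem stmt8 {V : Type*} [AddCommGroup V] [Module ℝ V]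
    (Φ : Finset V) (pair : V → V → ℝ)
    -- `pair β α = ⟨β, α^∨⟩` is linear in `β` (the linear extension of the root/coroot
    -- pairing):
    (hlin : ∀ α ∈ Φ, IsLinearMap ℝ fun β => pair β α)
    (hpair2 : ∀ α ∈ Φ, pair α α = 2)
    -- crystallographic:
    (hcrys : ∀ α ∈ Φ, ∀ β ∈ Φ, ∃ m : ℤ, pair β α = (m : ℝ))
    -- reduced:
    (hred : ∀ α ∈ Φ, ∀ t : ℝ, t • α ∈ Φ → t = 1 ∨ t = -1)
    (hroot_ne : ∀ α ∈ Φ, α ≠ 0)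
    -- reflections preserve the root system:
    (hrefl : ∀ α ∈ Φ, ∀ β ∈ Φ, β - pair β α • α ∈ Φ)
    -- positive roots and the base:
    (Pos Δ : Finset V) (hPosSub : Pos ⊆ Φ) (hΔSub : Δ ⊆ Pos)
    (hsplit : ∀ α ∈ Φ, (α ∈ Pos ↔ -α ∉ Pos))
    (hbase : ∀ γ ∈ Δ, ∀ β ∈ Pos, β ≠ γ → β - pair β γ • γ ∈ Pos)
    -- `N` is the number of positive roots:
    (N : ℕ) (hN : N = Pos.card)
    -- the chosen simple roots `γ_1, …, γ_N`:
    (g : ℕ → V) (hg : ∀ j, 1 ≤ j → j ≤ N → g j ∈ Δ)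
    -- `τ_1, …, τ_N` are pairwise distinct and constitute exactly the set of positive roots:
    (htauPos : ∀ j, 1 ≤ j → j ≤ N → reflComp pair g (j - 1) (g j) ∈ Pos)
    (htau : ∀ β ∈ Pos, ∃! j, 1 ≤ j ∧ j ≤ N ∧ reflComp pair g (j - 1) (g j) = β)
    (j : ℕ) (hj2 : 2 ≤ j) (hjN : j ≤ N) :
    pair ((2⁻¹ : ℝ) • ∑ k ∈ Finset.Icc 1 N, reflComp pair g (k - 1) (g k))
        (reflComp pair g (j - 1) (g j)) - 1 =
      ∑ k ∈ Finset.Icc 1 (j - 1),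
        pair (reflComp pair g (k - 1) (g k)) (reflComp pair g (j - 1) (g j)) ∧
    ∑ k ∈ Finset.Icc (j + 1) N,
        pair (reflComp pair g (k - 1) (g k)) (reflComp pair g (j - 1) (g j)) =
      ∑ k ∈ Finset.Icc 1 (j - 1),
        pair (reflComp pair g (k - 1) (g k)) (reflComp pair g (j - 1) (g j)) := by
  classical
  set τ : ℕ → V := fun k => reflComp pair g (k - 1) (g k) with hτdef
  have hτeq : ∀ k, reflComp pair g (k - 1) (g k) = τ k := fun k => rfl
  simp only [hτeq]
  have hgΦ : ∀ k, 1 ≤ k → k ≤ N → g k ∈ Φ := fun k h1 h2 => hPosSub (hΔSub (hg k h1 h2))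
  have props : ∀ m, m ≤ N →
      (∀ β γ : V, ∀ c : ℝ, reflComp pair g m (β - c • γ)
          = reflComp pair g m β - c • reflComp pair g m γ) ∧
      (∀ γ ∈ Φ, reflComp pair g m γ ∈ Φ) ∧
      (∀ β ∈ Submodule.span ℝ (Φ : Set V),
          reflComp pair g m β ∈ Submodule.span ℝ (Φ : Set V)) ∧
      (∀ γ ∈ Φ, ∀ β ∈ Submodule.span ℝ (Φ : Set V),
          pair (reflComp pair g m β) (reflComp pair g m γ) = pair β γ) :=
    fun m hm => reflComp_props Φ pair hlin hpair2 hroot_ne hrefl g m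
      (fun k h1 h2 => hgΦ k h1 (h2.trans hm))
  set S : V := ∑ β ∈ Pos, β with hSdef
  have hSspan : S ∈ Submodule.span ℝ (Φ : Set V) :=
    Submodule.sum_mem _ (fun β hβ => Submodule.subset_span (hPosSub hβ))
  have hSsum : ∑ k ∈ Finset.Icc 1 N, τ k = S := by
    refine Finset.sum_bij (fun k _ => τ k) ?_ ?_ ?_ ?_
    · intro k hk
      rw [Finset.mem_Icc] at hk
      exact htauPos k hk.1 hk.2
    · intro a ha b hb hab
      rw [Finset.mem_Icc] at ha hb
      obtain ⟨x, _, hun⟩ := htau (τ a) (htauPos a ha.1 ha.2)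
      have h1 := hun a ⟨ha.1, ha.2, rfl⟩
      have h2 := hun b ⟨hb.1, hb.2, hab.symm⟩
      rw [h1, h2]
    · intro β hβ
      obtain ⟨x, ⟨hx1, hx2, hx3⟩, _⟩ := htau β hβ
      exact ⟨x, Finset.mem_Icc.mpr ⟨hx1, hx2⟩, hx3⟩
    · intros; rfl
  -- the key computation: `w_m(2δ) = 2δ - 2(τ_1 + ⋯ + τ_m)`
  have hkey : ∀ m, m ≤ N → reflComp pair g m S
      = S - (2 : ℝ) • ∑ k ∈ Finset.Icc 1 m, τ k := by
    intro m
    induction m with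
    | zero => intro _; simp [reflComp]
    | succ m ih =>
      intro hmN
      have hgm1 : g (m + 1) ∈ Δ := hg _ (by omega) hmN
      have hstep : reflComp pair g (m + 1) S
          = reflComp pair g m (S - pair S (g (m + 1)) • g (m + 1)) := rfl
      rw [hstep, hSdef,
        pair_sumPos Φ pair hlin hpair2 hroot_ne Pos Δ hPosSub hΔSub hsplit hbase hgm1,
        ← hSdef, (props m (by omega)).1 S (g (m + 1)) 2, ih (by omega),
        Finset.sum_Icc_succ_top (by omega : 1 ≤ m + 1)]
      have hτm : τ (m + 1) = reflComp pair g m (g (m + 1)) := rfl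
      rw [hτm]
      module
  obtain ⟨jm, rfl⟩ : ∃ jm, j = jm + 1 := ⟨j - 1, by omega⟩
  have hj1 : jm + 1 - 1 = jm := rfl
  have hτjΦ : τ (jm + 1) ∈ Φ := hPosSub (htauPos (jm + 1) (by omega) hjN)
  have lτ := hlin (τ (jm + 1)) hτjΦ
  have hmain : pair (reflComp pair g jm S) (reflComp pair g jm (g (jm + 1)))
      = pair S (g (jm + 1)) :=
    (props jm (by omega)).2.2.2 _ (hgΦ (jm + 1) (by omega) hjN) S hSspan
  have hSg : pair S (g (jm + 1)) = 2 :=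
    pair_sumPos Φ pair hlin hpair2 hroot_ne Pos Δ hPosSub hΔSub hsplit hbase
      (hg (jm + 1) (by omega) hjN)
  have hτj : reflComp pair g jm (g (jm + 1)) = τ (jm + 1) := rfl
  rw [hkey jm (by omega), hSg, hτj] at hmain
  have hmapsum : ∀ (s : Finset ℕ), pair (∑ k ∈ s, τ k) (τ (jm + 1))
      = ∑ k ∈ s, pair (τ k) (τ (jm + 1)) := by
    intro s
    have h := map_sum (IsLinearMap.mk' _ lτ) τ s
    simp only [IsLinearMap.mk'_apply] at h
    exact h
  have hexp : pair (S - (2 : ℝ) • ∑ k ∈ Finset.Icc 1 jm, τ k) (τ (jm + 1))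
      = pair S (τ (jm + 1)) - 2 * ∑ k ∈ Finset.Icc 1 jm, pair (τ k) (τ (jm + 1)) := by
    rw [lτ.map_sub, lτ.map_smul, hmapsum, smul_eq_mul]
  rw [hexp] at hmain
  -- hmain : pair S (τ (jm+1)) - 2 * Σ_{k<j} = 2
  have hgoal1 : pair ((2⁻¹ : ℝ) • ∑ k ∈ Finset.Icc 1 N, τ k) (τ (jm + 1)) - 1
      = ∑ k ∈ Finset.Icc 1 (jm + 1 - 1), pair (τ k) (τ (jm + 1)) := by
    rw [hj1, lτ.map_smul, hSsum, smul_eq_mul]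
    linarith
  refine ⟨hgoal1, ?_⟩
  -- split the full sum
  have hIcc : ∀ n : ℕ, Finset.Icc 1 n = Finset.Ioc 0 n := by
    intro n; ext x; simp only [Finset.mem_Icc, Finset.mem_Ioc]; omega
  have hIcc2 : Finset.Icc (jm + 1 + 1) N = Finset.Ioc (jm + 1) N := by
    ext x; simp only [Finset.mem_Icc, Finset.mem_Ioc]; omega
  have hsplitsum : ∑ k ∈ Finset.Icc 1 N, pair (τ k) (τ (jm + 1))
      = ∑ k ∈ Finset.Icc 1 jm, pair (τ k) (τ (jm + 1)) + pair (τ (jm + 1)) (τ (jm + 1))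
        + ∑ k ∈ Finset.Icc (jm + 1 + 1) N, pair (τ k) (τ (jm + 1)) := by
    rw [hIcc, hIcc, hIcc2,
      ← Finset.sum_Ioc_consecutive _ (Nat.zero_le (jm + 1)) hjN,
      Finset.sum_Ioc_succ_top (Nat.zero_le jm)]
  have hfull : pair S (τ (jm + 1)) = ∑ k ∈ Finset.Icc 1 N, pair (τ k) (τ (jm + 1)) := by
    rw [← hSsum, hmapsum]
  rw [hsplitsum, hpair2 _ hτjΦ] at hfull
  rw [hj1]
  linarith
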